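/- Let i ≥ 2, let m ∈ ℝ^i be a vector whose truncation to the first i-1 coordinates is m' ∈ ℝ^{i-1} and whose last coordinate is m_i, and suppose ‖m'‖₂ < 1 and ‖m‖₂ ≤ 1. Let L' be the canonical Cholesky factor of the (i-1)×(i-1) matrix I - m' m'ᵀ (which is invertible since ‖m'‖₂ < 1). Define the i×i block matrix L with top-left block L', top-right block zero, bottom-left row -m_i·(L'⁻¹ m')ᵀ, and bottom-right scalar √((1 - ‖m‖₂²)/(1 - ‖m'‖₂²)). Then L L ᵀ = I - m mᵀ, i.e., L is a Cholesky factor of I - m mᵀ. -/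

import Mathlib

open Matrix

/-- `L` is the canonical Cholesky factor of `S`: it is lower triangular with nonnegative
diagonal entries, `L * Lᵀ = S`, the number of strictly positive diagonal entries of `L`
equals `rank S`, and every column of `L` whose diagonal entry is zero is entirely zero. -/
def IsCanonicalCholesky {T : ℕ} (S L : Matrix (Fin T) (Fin T) ℝ) : Prop :=
  (∀ i j : Fin T, i < j → L i j = 0) ∧
  (∀ i : Fin T, 0 ≤ L i i) ∧
  L * Lᵀ = S ∧
  (Finset.univ.filter fun i : Fin T => 0 < L i i).card = S.rank ∧
  (∀ j : Fin T, L j j = 0 → ∀ i : Fin T, L i j = 0)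

/-- The Euclidean norm `‖v‖₂ = √(∑ i, v i ^ 2)` of a vector `v ∈ ℝ^n`. -/
noncomputable def euclideanNorm {n : ℕ} (v : Fin n → ℝ) : ℝ :=
  Real.sqrt (∑ i, v i ^ 2)

/-- Recursive block formula for the Cholesky factor of `I - m mᵀ`: with `m ∈ ℝ^(n+1)`
(`n + 1 = i ≥ 2`), `m'` its truncation to the first `n` coordinates and `mᵢ = m (Fin.last n)`
its last coordinate, if `‖m'‖₂ < 1`, `‖m‖₂ ≤ 1` and `L'` is the canonical Cholesky factor of
`I - m' m'ᵀ`, then the block matrix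
`L = [[L', 0], [-mᵢ (L'⁻¹ m')ᵀ, √((1 - ‖m‖₂²)/(1 - ‖m'‖₂²))]]` satisfies `L * Lᵀ = I - m mᵀ`. -/
theorem cholesky_block_recursion (n : ℕ) (hn : 1 ≤ n) (m : Fin (n + 1) → ℝ)
    (hm' : euclideanNorm (fun j : Fin n => m j.castSucc) < 1)
    (hm : euclideanNorm m ≤ 1)
    (L' : Matrix (Fin n) (Fin n) ℝ)
    (hL' : IsCanonicalCholesky
      (1 - vecMulVec (fun j : Fin n => m j.castSucc) (fun j : Fin n => m j.castSucc)) L')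
    (L : Matrix (Fin (n + 1)) (Fin (n + 1)) ℝ)
    (hL : L =
      (fromBlocks L' 0
        (Matrix.of fun _ : Fin 1 => fun j : Fin n =>
          -(m (Fin.last n)) * (L'⁻¹ *ᵥ fun j : Fin n => m j.castSucc) j)
        (Matrix.of fun _ : Fin 1 => fun _ : Fin 1 =>
          Real.sqrt ((1 - euclideanNorm m ^ 2) /
            (1 - euclideanNorm (fun j : Fin n => m j.castSucc) ^ 2)))).submatrix
        finSumFinEquiv.symm finSumFinEquiv.symm) :
    L * Lᵀ = 1 - vecMulVec m m := by
  obtain ⟨-, -, hL'fac, -, -⟩ := hL'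
  simp only [euclideanNorm] at hm' hm hL
  set v : Fin n → ℝ := fun j : Fin n => m j.castSucc with hv
  set μ : ℝ := m (Fin.last n) with hμ
  set s : ℝ := Real.sqrt ((1 - Real.sqrt (∑ i, m i ^ 2) ^ 2) /
      (1 - Real.sqrt (∑ i, v i ^ 2) ^ 2)) with hs
  -- squared norms
  have hva : ∑ j, v j ^ 2 = Real.sqrt (∑ j, v j ^ 2) ^ 2 := by
    rw [Real.sq_sqrt (Finset.sum_nonneg fun _ _ => sq_nonneg _)]
  have ha2 : ∑ j, v j ^ 2 < 1 := by
    rw [hva]; nlinarith [Real.sqrt_nonneg (∑ j, v j ^ 2)]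
  have hb2 : ∑ i, m i ^ 2 ≤ 1 := by
    have h0 : (0:ℝ) ≤ ∑ i, m i ^ 2 := Finset.sum_nonneg fun _ _ => sq_nonneg _
    have := Real.sq_sqrt h0
    nlinarith [Real.sqrt_nonneg (∑ i, m i ^ 2)]
  have hsplit : ∑ i, m i ^ 2 = (∑ j, v j ^ 2) + μ ^ 2 := by
    rw [Fin.sum_univ_castSucc]
  have hpos : 0 < 1 - ∑ j, v j ^ 2 := by linarith
  have hs2 : s ^ 2 = (1 - ∑ i, m i ^ 2) / (1 - ∑ j, v j ^ 2) := by
    rw [hs, ← hva, Real.sq_sqrt (Finset.sum_nonneg fun _ _ => sq_nonneg _),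
      Real.sq_sqrt (div_nonneg (by linarith) hpos.le)]
  -- S := 1 - v vᵀ is invertible with explicit inverse
  set S : Matrix (Fin n) (Fin n) ℝ := 1 - vecMulVec v v with hS
  set c : ℝ := (1 - ∑ j, v j ^ 2)⁻¹ with hc
  have hca : 1 + c * (∑ j, v j ^ 2) = c := by
    rw [hc]; field_simp; ring
  have hvv : vecMulVec v v * vecMulVec v v = (∑ j, v j ^ 2) • vecMulVec v v := by
    ext i j
    simp [vecMulVec_apply, mul_apply, Finset.mul_sum, Finset.sum_mul]
    ring_nf
    congr 1; ext k; ring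
  have hST : S * (1 + c • vecMulVec v v) = 1 := by
    rw [hS]
    have h1 : (1 - vecMulVec v v) * (1 + c • vecMulVec v v)
        = 1 + (c - 1 - c * (∑ j, v j ^ 2)) • vecMulVec v v := by
      simp only [mul_add, mul_one, one_mul, sub_mul, Matrix.mul_smul, hvv, smul_smul]
      module
    rw [h1]
    have h2 : c - 1 - c * (∑ j, v j ^ 2) = 0 := by linarith
    rw [h2, zero_smul, add_zero]
  have hSunit : IsUnit S.det := by
    have := Matrix.det_mul S (1 + c • vecMulVec v v)
    rw [hST, Matrix.det_one] at this
    exact IsUnit.of_mul_eq_one _ this.symm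
  have hSinv : S⁻¹ = 1 + c • vecMulVec v v := Matrix.inv_eq_right_inv hST
  have hvvv : (vecMulVec v v) *ᵥ v = (∑ j, v j ^ 2) • v := by
    ext i
    simp only [Matrix.mulVec, dotProduct, vecMulVec_apply, Pi.smul_apply, smul_eq_mul]
    rw [Finset.sum_mul]
    exact Finset.sum_congr rfl fun k _ => by ring
  have hSinvv : S⁻¹ *ᵥ v = c • v := by
    rw [hSinv, Matrix.add_mulVec, Matrix.one_mulVec, Matrix.smul_mulVec, hvvv]
    ext i
    simp only [Pi.add_apply, Pi.smul_apply, smul_eq_mul]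
    linear_combination (v i) * hca
  -- L' is invertible
  have hL'unit : IsUnit L'.det := by
    have hd := congrArg Matrix.det hL'fac
    rw [Matrix.det_mul, Matrix.det_transpose] at hd
    have : IsUnit (L'.det * L'.det) := by rw [hd]; exact hSunit
    exact isUnit_of_mul_isUnit_left this
  set w : Fin n → ℝ := L'⁻¹ *ᵥ v with hw
  have hLw : L' *ᵥ w = v := by
    rw [hw, Matrix.mulVec_mulVec, Matrix.mul_nonsing_inv _ hL'unit, Matrix.one_mulVec]
  have hinv : L'⁻¹ᵀ * L'⁻¹ = S⁻¹ := by
    rw [Matrix.transpose_nonsing_inv, ← Matrix.mul_inv_rev, hL'fac]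
  have hww : w ⬝ᵥ w = c * ∑ j, v j ^ 2 := by
    have h1 : w ⬝ᵥ w = v ⬝ᵥ (S⁻¹ *ᵥ v) := by
      calc w ⬝ᵥ w = (v ᵥ* L'⁻¹ᵀ) ⬝ᵥ (L'⁻¹ *ᵥ v) := by rw [hw, Matrix.vecMul_transpose]
        _ = v ⬝ᵥ (L'⁻¹ᵀ *ᵥ (L'⁻¹ *ᵥ v)) := (Matrix.dotProduct_mulVec _ _ _).symm
        _ = v ⬝ᵥ ((L'⁻¹ᵀ * L'⁻¹) *ᵥ v) := by rw [Matrix.mulVec_mulVec]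
        _ = v ⬝ᵥ (S⁻¹ *ᵥ v) := by rw [hinv]
    rw [h1, hSinvv]
    simp only [dotProduct, Pi.smul_apply, smul_eq_mul, Finset.mul_sum]
    congr 1; ext j; ring
  -- block computation
  rw [hL, Matrix.transpose_submatrix, Matrix.submatrix_mul_equiv]
  have key : (fromBlocks L' 0
        (Matrix.of fun _ : Fin 1 => fun j : Fin n => -μ * w j)
        (Matrix.of fun _ : Fin 1 => fun _ : Fin 1 => s)) *
      (fromBlocks L' 0
        (Matrix.of fun _ : Fin 1 => fun j : Fin n => -μ * w j)
        (Matrix.of fun _ : Fin 1 => fun _ : Fin 1 => s))ᵀ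
      = 1 - vecMulVec (Sum.elim v (fun _ => μ)) (Sum.elim v (fun _ => μ)) := by
    rw [Matrix.fromBlocks_transpose, Matrix.fromBlocks_multiply]
    ext i j
    rcases i with i | i <;> rcases j with j | j
    · have := congrFun (congrFun hL'fac i) j
      simpa [hS, Matrix.one_apply, vecMulVec_apply] using this
    · have hLwi := congrFun hLw i
      simp only [Matrix.mulVec, dotProduct] at hLwi
      simp only [Matrix.fromBlocks_apply₁₂, Matrix.add_apply, Matrix.mul_apply,
        Matrix.transpose_apply, Matrix.of_apply, Matrix.zero_apply, mul_zero,
        Finset.sum_const_zero, add_zero, Matrix.sub_apply, Matrix.one_apply,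
        vecMulVec_apply, Sum.elim_inl, Sum.elim_inr]
      have : ∑ k, L' i k * (-μ * w k) = -μ * ∑ k, L' i k * w k := by
        rw [Finset.mul_sum]; congr 1; ext k; ring
      rw [this, hLwi]
      simp [mul_comm]
    · have hLwj := congrFun hLw j
      simp only [Matrix.mulVec, dotProduct] at hLwj
      simp only [Matrix.fromBlocks_apply₂₁, Matrix.add_apply, Matrix.mul_apply,
        Matrix.transpose_apply, Matrix.of_apply, Matrix.zero_apply, zero_mul, mul_zero,
        Finset.sum_const_zero, add_zero, Matrix.sub_apply, Matrix.one_apply,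
        vecMulVec_apply, Sum.elim_inl, Sum.elim_inr]
      have : ∑ k, -μ * w k * L' j k = -μ * ∑ k, L' j k * w k := by
        rw [Finset.mul_sum]; congr 1; ext k; ring
      rw [this, hLwj]
      simp
    · simp only [Matrix.fromBlocks_apply₂₂, Matrix.add_apply, Matrix.mul_apply,
        Matrix.transpose_apply, Matrix.of_apply, Matrix.sub_apply, Matrix.one_apply,
        vecMulVec_apply, Sum.elim_inr, Fin.eq_zero i, Fin.eq_zero j, if_true,
        Finset.univ_unique, Finset.sum_singleton]
      have h1 : ∑ k, -μ * w k * (-μ * w k) = μ ^ 2 * (w ⬝ᵥ w) := by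
        simp only [dotProduct, Finset.mul_sum]; congr 1; ext k; ring
      rw [h1, hww]
      rw [show s * s = (1 - ∑ i, m i ^ 2) / (1 - ∑ j, v j ^ 2) by rw [← hs2]; ring]
      rw [hsplit, hc]
      field_simp
      ring
  rw [key]
  have hept : ∀ p : Fin n ⊕ Fin 1, Sum.elim v (fun _ => μ) p = m (finSumFinEquiv p) := by
    rintro (j | j)
    · simp only [Sum.elim_inl, finSumFinEquiv_apply_left, hv]
      congr 1
    · simp only [Sum.elim_inr, finSumFinEquiv_apply_right, hμ]
      congr 1
      ext
      simp [Fin.last]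
  ext i j
  simp only [Matrix.submatrix_apply, Matrix.sub_apply, Matrix.one_apply,
    vecMulVec_apply]
  rw [hept, hept, Equiv.apply_symm_apply, Equiv.apply_symm_apply]
  congr 1
  simp [Matrix.one_apply, Equiv.symm_apply_eq]
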